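/- Let X and Y be real normed spaces, let G be a set-valued map from X to Y with nonempty convex values which is Lipschitz around a point x, and let y ∈ G(x). Then for every v ∈ X the set D♭G(x,y)(v) is convex. -/

import Mathlib

open Filter Topology Metric Pointwise

/-- The adjacent (intermediate) tangent cone to `K` at `x`. -/
def adjacentCone {X : Type*} [NormedAddCommGroup X] [NormedSpace ℝ X]
    (K : Set X) (x : X) : Set X :=
  {v | Tendsto (fun ε : ℝ => infDist (x + ε • v) K / ε) (𝓝[>] (0 : ℝ)) (𝓝 0)}

/-- A set-valued map `G` is Lipschitz around `x`. -/
def LipschitzAround {X Y : Type*} [NormedAddCommGroup X] [NormedAddCommGroup Y]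
    (G : X → Set Y) (x : X) : Prop :=
  ∃ c : ℝ, 0 ≤ c ∧ ∃ δ : ℝ, 0 < δ ∧ ∀ x₁ x₂ : X, ‖x₁ - x‖ < δ → ‖x₂ - x‖ < δ →
    G x₁ ⊆ G x₂ + {z : Y | ‖z‖ ≤ c * ‖x₁ - x₂‖}

/-- The adjacent directional derivative of a set-valued map `G` at `(x, y) ∈ graph G`. -/
def adjacentDeriv {X Y : Type*} [NormedAddCommGroup X] [NormedSpace ℝ X]
    [NormedAddCommGroup Y] [NormedSpace ℝ Y]
    (G : X → Set Y) (x : X) (y : Y) (v : X) : Set Y :=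
  {w | (v, w) ∈ adjacentCone {p : X × Y | p.2 ∈ G p.1} (x, y)}

set_option maxHeartbeats 1000000 in
theorem convex_adjacentDeriv
    {X Y : Type*} [NormedAddCommGroup X] [NormedSpace ℝ X]
    [NormedAddCommGroup Y] [NormedSpace ℝ Y]
    (G : X → Set Y) (x : X) (y : Y)
    (hne : ∀ x' : X, (G x').Nonempty) (hconv : ∀ x' : X, Convex ℝ (G x'))
    (hlip : LipschitzAround G x) (hy : y ∈ G x) :
    ∀ v : X, Convex ℝ (adjacentDeriv G x y v) := by
  intro v w₁ hw₁ w₂ hw₂ a b ha hb hab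
  obtain ⟨c, hc, δ, hδ, hlip⟩ := hlip
  set K : Set (X × Y) := {p : X × Y | p.2 ∈ G p.1} with hK
  have hKne : K.Nonempty := ⟨(x, y), hy⟩
  simp only [adjacentDeriv, adjacentCone, Set.mem_setOf_eq] at hw₁ hw₂ ⊢
  rw [Metric.tendsto_nhds] at hw₁ hw₂ ⊢
  intro η hη
  have hC : (0:ℝ) < 1 + 2 * c := by linarith
  set η' := η / (2 * (1 + 2 * c)) with hη'def
  have hη' : 0 < η' := by positivity
  set δ₀ := δ / (η' + ‖v‖ + 1) with hδ₀def
  have hδ₀ : 0 < δ₀ := by positivity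
  have hsmall : ∀ᶠ ε in 𝓝[>] (0:ℝ), ε < δ₀ :=
    eventually_nhdsWithin_of_eventually_nhds (eventually_lt_nhds hδ₀)
  filter_upwards [hw₁ η' hη', hw₂ η' hη', self_mem_nhdsWithin, hsmall]
    with ε h1 h2 hεpos hεδ
  simp only [Set.mem_Ioi] at hεpos
  -- bounds on infDist for w₁ and w₂
  have key : ∀ w : Y, dist (infDist ((x, y) + ε • (v, w)) K / ε) 0 < η' →
      infDist ((x, y) + ε • (v, w)) K < η' * ε := by
    intro w h
    rw [Real.dist_eq, sub_zero, abs_of_nonneg (div_nonneg infDist_nonneg hεpos.le)] at h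
    exact (div_lt_iff₀ hεpos).mp h
  obtain ⟨q₁, hq₁K, hq₁⟩ := (infDist_lt_iff hKne).mp (key w₁ h1)
  obtain ⟨q₂, hq₂K, hq₂⟩ := (infDist_lt_iff hKne).mp (key w₂ h2)
  rw [Prod.dist_eq, max_lt_iff] at hq₁ hq₂
  simp only [Prod.smul_mk, Prod.mk_add_mk] at hq₁ hq₂
  have hx1 : dist (x + ε • v) q₁.1 < η' * ε := hq₁.1
  have hy1 : dist (y + ε • w₁) q₁.2 < η' * ε := hq₁.2
  have hx2 : dist (x + ε • v) q₂.1 < η' * ε := hq₂.1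
  have hy2 : dist (y + ε • w₂) q₂.2 < η' * ε := hq₂.2
  -- q₁.1 and q₂.1 are within δ of x
  have hεδ' : ε * (η' + ‖v‖ + 1) < δ := by
    have := (mul_lt_mul_of_pos_right hεδ (by positivity : (0:ℝ) < η' + ‖v‖ + 1))
    rwa [hδ₀def, div_mul_cancel₀ _ (by positivity : (η' + ‖v‖ + 1) ≠ 0)] at this
  have hnear : ∀ q : X × Y, dist (x + ε • v) q.1 < η' * ε → ‖q.1 - x‖ < δ := by
    intro q hq
    have : ‖q.1 - x‖ ≤ ‖q.1 - (x + ε • v)‖ + ‖ε • v‖ := by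
      have := norm_add_le (q.1 - (x + ε • v)) (ε • v)
      simpa [sub_add_eq_sub_sub, sub_add_cancel] using this
    have hv : ‖ε • v‖ = ε * ‖v‖ := by
      rw [norm_smul, Real.norm_eq_abs, abs_of_pos hεpos]
    have h1 : ‖q.1 - (x + ε • v)‖ < η' * ε := by
      rwa [← dist_eq_norm, dist_comm]
    calc ‖q.1 - x‖ ≤ ‖q.1 - (x + ε • v)‖ + ‖ε • v‖ := this
      _ < η' * ε + ε * ‖v‖ := by rw [hv]; linarith
      _ ≤ ε * (η' + ‖v‖ + 1) := by nlinarith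
      _ < δ := hεδ'
  have hx1δ := hnear q₁ hx1
  have hx2δ := hnear q₂ hx2
  -- Lipschitz: move q₁.2 to G q₂.1
  have hmem : q₁.2 ∈ G q₂.1 + {z : Y | ‖z‖ ≤ c * ‖q₁.1 - q₂.1‖} :=
    hlip q₁.1 q₂.1 hx1δ hx2δ hq₁K
  obtain ⟨z, hz, u, hu, hzu⟩ := Set.mem_add.mp hmem
  have hx12 : ‖q₁.1 - q₂.1‖ ≤ 2 * (η' * ε) := by
    have : ‖q₁.1 - q₂.1‖ ≤ ‖q₁.1 - (x + ε • v)‖ + ‖(x + ε • v) - q₂.1‖ := by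
      have := norm_add_le (q₁.1 - (x + ε • v)) ((x + ε • v) - q₂.1)
      simpa [sub_add_sub_cancel] using this
    have a1 : ‖q₁.1 - (x + ε • v)‖ < η' * ε := by rwa [← dist_eq_norm, dist_comm]
    have a2 : ‖(x + ε • v) - q₂.1‖ < η' * ε := by rwa [← dist_eq_norm]
    linarith
  have hu' : ‖u‖ ≤ 2 * c * (η' * ε) := by
    have : ‖u‖ ≤ c * ‖q₁.1 - q₂.1‖ := hu
    nlinarith [mul_le_mul_of_nonneg_left hx12 hc]
  -- convex combination
  have hcomb : a • z + b • q₂.2 ∈ G q₂.1 := (hconv q₂.1) hz hq₂K ha hb hab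
  have hqK : ((q₂.1, a • z + b • q₂.2) : X × Y) ∈ K := hcomb
  -- estimate the distance
  have hle : infDist ((x, y) + ε • (v, a • w₁ + b • w₂)) K ≤ η' * ε * (1 + 2 * c) := by
    refine le_trans (infDist_le_dist_of_mem hqK) ?_
    rw [Prod.dist_eq]
    simp only [Prod.smul_mk, Prod.mk_add_mk]
    apply max_le
    · calc dist (x + ε • v) q₂.1 ≤ η' * ε := le_of_lt hx2
        _ ≤ η' * ε * (1 + 2 * c) := by
            nlinarith [mul_nonneg hc (mul_pos hη' hεpos).le]
    · rw [dist_eq_norm]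
      have hrw : y + ε • (a • w₁ + b • w₂) - (a • z + b • q₂.2)
          = a • ((y + ε • w₁) - z) + b • ((y + ε • w₂) - q₂.2) := by
        rw [smul_sub, smul_sub]
        have : y = a • y + b • y := by rw [← add_smul, hab, one_smul]
        rw [smul_add]
        nth_rewrite 1 [this]
        module
      rw [hrw]
      have hz1 : ‖(y + ε • w₁) - z‖ ≤ η' * ε + 2 * c * (η' * ε) := by
        have : (y + ε • w₁) - z = ((y + ε • w₁) - q₁.2) + u := by
          rw [← hzu]; abel
        rw [this]
        refine le_trans (norm_add_le _ _) ?_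
        have : ‖(y + ε • w₁) - q₁.2‖ < η' * ε := by rwa [← dist_eq_norm]
        linarith
      have hz2 : ‖(y + ε • w₂) - q₂.2‖ ≤ η' * ε := by
        rw [← dist_eq_norm]; exact le_of_lt hy2
      calc ‖a • ((y + ε • w₁) - z) + b • ((y + ε • w₂) - q₂.2)‖
          ≤ a * ‖(y + ε • w₁) - z‖ + b * ‖(y + ε • w₂) - q₂.2‖ := by
            refine le_trans (norm_add_le _ _) ?_
            rw [norm_smul, norm_smul, Real.norm_eq_abs, Real.norm_eq_abs,
              abs_of_nonneg ha, abs_of_nonneg hb]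
        _ ≤ a * (η' * ε + 2 * c * (η' * ε)) + b * (η' * ε) := by
            gcongr
        _ ≤ η' * ε * (1 + 2 * c) := by
            have hid : a * (η' * ε + 2 * c * (η' * ε)) + b * (η' * ε)
                = η' * ε * (1 + 2 * c) - 2 * b * c * (η' * ε) := by
              have hba : a = 1 - b := by linarith
              rw [hba]; ring
            rw [hid]
            have hnn : 0 ≤ 2 * b * c * (η' * ε) := by positivity
            linarith
  rw [Real.dist_eq, sub_zero, abs_of_nonneg (div_nonneg infDist_nonneg hεpos.le)]
  rw [div_lt_iff₀ hεpos]
  have hhalf : η' * (1 + 2 * c) = η / 2 := by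
    rw [hη'def]; field_simp
  calc infDist ((x, y) + ε • (v, a • w₁ + b • w₂)) K ≤ η' * ε * (1 + 2 * c) := hle
    _ = η / 2 * ε := by rw [← hhalf]; ring
    _ < η * ε := by nlinarith
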